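/- Let g ∈ ℝ[[x]] satisfy g(x)·g(−x) = 1, where g(−x) denotes the power series obtained from g by x ↦ −x (rescaling by −1). Define h₁ = g + 1 and h_{n+1} = g·hₙ + hₙ(−x) for n ≥ 1. Then for every n ≥ 1, g(x)·hₙ(−x) = hₙ(x); moreover, if the constant term of g is 1, then the constant term of hₙ is 2ⁿ (in particular nonzero). (Consequently, the Riordan involution R = (g(x), −x) satisfies R = BₙDBₙ⁻¹ where Bₙ = (hₙ(x), x) is an invertible element of the Appell subgroup and D = (1, −x); here Bₙ is the matrix whose even-indexed columns come from (RD + D)ⁿ and odd-indexed columns from (RD − D)ⁿ, constructed from R itself.) -/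

import Mathlib

open PowerSeries Finset

/-- Let `g · g(−x) = 1` (so `R = (g(x), −x)` is a Riordan involution), and define
`h₁ = g + 1`, `h_{n+1} = g·hₙ + hₙ(−x)`. Then `g(x)·hₙ(−x) = hₙ(x)` for all `n ≥ 1`
(so `R = BₙDBₙ⁻¹` with `Bₙ = (hₙ(x), x)` in the Appell subgroup); moreover if the
constant term of `g` is `1` then the constant term of `hₙ` is `2ⁿ`. -/
theorem stmt_18 (g : PowerSeries ℝ)
    (hg : g * PowerSeries.rescale (-1 : ℝ) g = 1)
    (h : ℕ → PowerSeries ℝ)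
    (h1 : h 1 = g + 1)
    (hrec : ∀ n : ℕ, 1 ≤ n →
      h (n + 1) = g * h n + PowerSeries.rescale (-1 : ℝ) (h n)) :
    ∀ n : ℕ, 1 ≤ n →
      g * PowerSeries.rescale (-1 : ℝ) (h n) = h n ∧
      (PowerSeries.constantCoeff g = 1 →
        PowerSeries.constantCoeff (h n) = 2 ^ n) := by
  have hcc : ∀ p : PowerSeries ℝ,
      constantCoeff (rescale (-1 : ℝ) p) = constantCoeff p := by
    intro p
    rw [← coeff_zero_eq_constantCoeff, coeff_rescale]
    simp
  intro n hn
  induction n with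
  | zero => omega
  | succ m ih =>
    rcases Nat.eq_zero_or_pos m with hm | hm
    · subst hm
      constructor
      · rw [h1, map_add, mul_add, hg, map_one, mul_one, add_comm]
      · intro hgc
        rw [h1, map_add, map_one, hgc]; norm_num
    · obtain ⟨ihm, ihc⟩ := ih hm
      rw [hrec m hm]
      constructor
      · rw [map_add, map_mul, rescale_rescale]
        norm_num
        rw [mul_add, ← mul_assoc, hg, one_mul, add_comm]
      · intro hgc
        rw [map_add, map_mul, hgc, hcc, ihc hgc, one_mul]
        ring
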